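/- For any stationary distribution p of the lumped-chain rate matrix Q̂, the expected departure rate of each queue equals its arrival rate: Σ_{A ⊆ N, i∈A} p(A) r_{i,A} = λ_i for every i ∈ N; equivalently, Σ_{A ⊆ N, i∈A} p(A) r_{i,A}/λ_i = 1. -/

import Mathlib

open Finset

/-- The lumped-chain rate matrix `Q̂`: from state `A`, queue `i ∉ A` turns on at rate
`λ_i` (moving to `insert i A`), queue `i ∈ A` empties at rate `r_{i,A} − λ_i`
(moving to `A.erase i`), and the diagonal entry is minus the total outgoing rate. -/
noncomputable def Qhat {n : ℕ} (lam : Fin n → ℝ) (r : Fin n → Finset (Fin n) → ℝ)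
    (A B : Finset (Fin n)) : ℝ :=
  if A = B then -((∑ i ∈ Aᶜ, lam i) + ∑ i ∈ A, (r i A - lam i))
  else (∑ i ∈ Aᶜ, if B = insert i A then lam i else 0)
    + ∑ i ∈ A, if B = A.erase i then r i A - lam i else 0

/-- A stationary distribution of the lumped chain `Q̂`. -/
def IsStationaryLumped {n : ℕ} (lam : Fin n → ℝ) (r : Fin n → Finset (Fin n) → ℝ)
    (p : Finset (Fin n) → ℝ) : Prop :=
  (∀ A, 0 ≤ p A ∧ p A ≤ 1) ∧ (∑ A : Finset (Fin n), p A) = 1 ∧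
    ∀ B : Finset (Fin n), (∑ A : Finset (Fin n), p A * Qhat lam r A B) = 0

/-- The refined delay approximation
`t_i = Σ_{A ∋ i} p(A) r_{i,A} / ((r_{i,A} − λ_i) λ_i)`. -/
noncomputable def tApprox {n : ℕ} (lam : Fin n → ℝ) (r : Fin n → Finset (Fin n) → ℝ)
    (p : Finset (Fin n) → ℝ) (i : Fin n) : ℝ :=
  ∑ A ∈ Finset.univ.filter (fun A : Finset (Fin n) => i ∈ A),
    p A * r i A / ((r i A - lam i) * lam i)

/-- The second-degree upper bound
`t̄_i = Σ_{Ā ⊆ N∖{i}} π̄_i(Ā) / (r_{i,Ā∪{i}} − λ_i)` with `p̄_j = λ_j / r_{j,N}`. -/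
noncomputable def tUpper {n : ℕ} (lam : Fin n → ℝ) (r : Fin n → Finset (Fin n) → ℝ)
    (i : Fin n) : ℝ :=
  ∑ A ∈ (Finset.univ.erase i).powerset,
    ((∏ j ∈ A, lam j / r j Finset.univ) *
      ∏ l ∈ (Finset.univ.erase i) \ A, (1 - lam l / r l Finset.univ)) /
      (r i (insert i A) - lam i)

/-- The second-degree lower bound
`t̲_i = 1 / (Σ_{A̲ ⊆ N∖{i}} π̲_i(A̲) r_{i,A̲∪{i}} − λ_i)` with `p̲_j = λ_j / r_{j,{j}}`. -/
noncomputable def tLower {n : ℕ} (lam : Fin n → ℝ) (r : Fin n → Finset (Fin n) → ℝ)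
    (i : Fin n) : ℝ :=
  1 / ((∑ A ∈ (Finset.univ.erase i).powerset,
    ((∏ j ∈ A, lam j / r j {j}) *
      ∏ l ∈ (Finset.univ.erase i) \ A, (1 - lam l / r l {l})) *
      r i (insert i A)) - lam i)

/-- under any stationary distribution of the lumped chain, the expected
departure rate of each queue equals its arrival rate. -/
theorem stationary_flow_balance {n : ℕ} (hn : 1 ≤ n)
    (lam : Fin n → ℝ) (hlam : ∀ i, 0 < lam i)
    (r : Fin n → Finset (Fin n) → ℝ)
    (hr_pos : ∀ (i : Fin n) (A : Finset (Fin n)), i ∈ A → 0 < r i A)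
    (hr_mono : ∀ (i : Fin n) (A B : Finset (Fin n)), i ∈ A → A ⊆ B → r i B ≤ r i A)
    (hstab : ∀ i, lam i < r i Finset.univ)
    (p : Finset (Fin n) → ℝ) (hp : IsStationaryLumped lam r p) :
    ∀ i : Fin n,
      (∑ A ∈ Finset.univ.filter (fun A : Finset (Fin n) => i ∈ A), p A * r i A) = lam i ∧
      (∑ A ∈ Finset.univ.filter (fun A : Finset (Fin n) => i ∈ A), p A * r i A / lam i) = 1 := by
  intro i
  obtain ⟨hp0, hp1, hp2⟩ := hp
  have hlami : lam i ≠ 0 := (hlam i).ne'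
  have key : (∑ A ∈ Finset.univ.filter (fun A : Finset (Fin n) => i ∈ A), p A * r i A)
      = lam i := by
    have h0 : (0:ℝ) = ∑ B ∈ Finset.univ.filter (fun B : Finset (Fin n) => i ∈ B),
        ∑ A : Finset (Fin n), p A * Qhat lam r A B := by
      rw [Finset.sum_congr rfl (fun B _ => hp2 B)]; simp
    rw [Finset.sum_comm] at h0
    have hg : ∀ A : Finset (Fin n),
        (∑ B ∈ Finset.univ.filter (fun B : Finset (Fin n) => i ∈ B), Qhat lam r A B)
        = if i ∈ A then lam i - r i A else lam i := by
      intro A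
      have hq : ∀ B, Qhat lam r A B =
          (if A = B then -((∑ j ∈ Aᶜ, lam j) + ∑ j ∈ A, (r j A - lam j)) else 0)
          + ((∑ j ∈ Aᶜ, if B = insert j A then lam j else 0)
            + ∑ j ∈ A, if B = A.erase j then r j A - lam j else 0) := by
        intro B
        by_cases h : A = B
        · subst h
          simp only [Qhat, if_pos rfl]
          have h1 : (∑ j ∈ Aᶜ, if A = insert j A then lam j else 0) = 0 :=
            Finset.sum_eq_zero fun j hj => if_neg (fun he =>
              (Finset.mem_compl.mp hj) (Finset.insert_eq_self.mp he.symm))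
          have h2 : (∑ j ∈ A, if A = A.erase j then r j A - lam j else 0) = 0 :=
            Finset.sum_eq_zero fun j hj => if_neg (fun he =>
              (Finset.erase_eq_self.mp he.symm) hj)
          rw [h1, h2]; ring
        · simp [Qhat, h]
      rw [Finset.sum_congr rfl (fun B _ => hq B)]
      rw [Finset.sum_add_distrib, Finset.sum_add_distrib, Finset.sum_comm, Finset.sum_comm
        (s := Finset.univ.filter (fun B : Finset (Fin n) => i ∈ B)) (t := A)]
      have e1 : (∑ B ∈ Finset.univ.filter (fun B : Finset (Fin n) => i ∈ B),
          if A = B then -((∑ j ∈ Aᶜ, lam j) + ∑ j ∈ A, (r j A - lam j)) else 0)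
          = if i ∈ A then -((∑ j ∈ Aᶜ, lam j) + ∑ j ∈ A, (r j A - lam j)) else 0 := by
        rw [Finset.sum_ite_eq]
        simp
      have e2 : ∀ j ∈ Aᶜ, (∑ B ∈ Finset.univ.filter (fun B : Finset (Fin n) => i ∈ B),
          if B = insert j A then lam j else 0) = if i ∈ insert j A then lam j else 0 := by
        intro j hj
        rw [Finset.sum_ite_eq']
        simp
      have e3 : ∀ j ∈ A, (∑ B ∈ Finset.univ.filter (fun B : Finset (Fin n) => i ∈ B),
          if B = A.erase j then r j A - lam j else 0)
          = if i ∈ A.erase j then r j A - lam j else 0 := by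
        intro j hj
        rw [Finset.sum_ite_eq']
        simp
      rw [e1, Finset.sum_congr rfl e2, Finset.sum_congr rfl e3]
      by_cases hiA : i ∈ A
      · have f2 : (∑ j ∈ Aᶜ, if i ∈ insert j A then lam j else 0) = ∑ j ∈ Aᶜ, lam j :=
          Finset.sum_congr rfl fun j _ => if_pos (Finset.mem_insert_of_mem hiA)
        have f3 : (∑ j ∈ A, if i ∈ A.erase j then r j A - lam j else 0)
            = (∑ j ∈ A, (r j A - lam j)) - (r i A - lam i) := by
          rw [← Finset.add_sum_erase _ _ hiA,
            ← Finset.add_sum_erase _ (fun j => r j A - lam j) hiA,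
            if_neg (Finset.notMem_erase i A)]
          have hcongr : ∀ j ∈ A.erase i,
              (if i ∈ A.erase j then r j A - lam j else 0) = r j A - lam j := fun j hj =>
            if_pos (Finset.mem_erase.mpr
              ⟨fun h => (Finset.mem_erase.mp hj).1 h.symm, hiA⟩)
          rw [Finset.sum_congr rfl hcongr]
          ring
        simp only [if_pos hiA]
        rw [f2, f3]
        ring
      · have f2 : (∑ j ∈ Aᶜ, if i ∈ insert j A then lam j else 0) = lam i := by
          have hcongr : ∀ j ∈ Aᶜ,
              (if i ∈ insert j A then lam j else 0) = if i = j then lam j else 0 := by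
            intro j hj
            by_cases hji : i = j
            · subst hji; simp
            · rw [if_neg hji, if_neg (fun hmem => by
                rcases Finset.mem_insert.mp hmem with h | h
                · exact hji h
                · exact hiA h)]
          rw [Finset.sum_congr rfl hcongr, Finset.sum_ite_eq Aᶜ i (fun j => lam j),
            if_pos (Finset.mem_compl.mpr hiA)]
        have f3 : (∑ j ∈ A, if i ∈ A.erase j then r j A - lam j else 0) = 0 :=
          Finset.sum_eq_zero fun j _ => if_neg (fun h => hiA (Finset.mem_of_mem_erase h))
        simp only [if_neg hiA]
        rw [f2, f3]
        ring
    have h1 : (0:ℝ) = ∑ A : Finset (Fin n),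
        p A * (if i ∈ A then lam i - r i A else lam i) := by
      rw [h0, Finset.sum_congr rfl (fun A _ => by rw [← Finset.mul_sum, hg A])]
    have h2 : ∀ A : Finset (Fin n), p A * (if i ∈ A then lam i - r i A else lam i)
        = p A * lam i - (if i ∈ A then p A * r i A else 0) := by
      intro A; split <;> ring
    rw [Finset.sum_congr rfl (fun A _ => h2 A), Finset.sum_sub_distrib,
      ← Finset.sum_mul, hp1, one_mul, ← Finset.sum_filter] at h1
    linarith
  refine ⟨key, ?_⟩
  have : (∑ A ∈ Finset.univ.filter (fun A : Finset (Fin n) => i ∈ A), p A * r i A / lam i)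
      = (∑ A ∈ Finset.univ.filter (fun A : Finset (Fin n) => i ∈ A), p A * r i A) / lam i := by
    rw [Finset.sum_div]
  rw [this, key, div_self hlami]
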